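/- If 1/2 < H < 1, then ρ_1^2 < ρ_3, i.e., (2^{2H-1} - 1)^2 < (1/2)(4^{2H} - 2·3^{2H} + 2^{2H}). -/

import Mathlib

open Real Set

noncomputable def gFun (a : ℝ) : ℝ :=
  Real.exp (a * Real.log 4) + 6 * Real.exp (a * Real.log 2)
    - 4 * Real.exp (a * Real.log 3) - 4

noncomputable def gFun' (a : ℝ) : ℝ :=
  Real.log 4 * Real.exp (a * Real.log 4) + 6 * (Real.log 2 * Real.exp (a * Real.log 2))
    - 4 * (Real.log 3 * Real.exp (a * Real.log 3))

noncomputable def gFun'' (a : ℝ) : ℝ :=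
  Real.log 4 ^ 2 * Real.exp (a * Real.log 4) + 6 * (Real.log 2 ^ 2 * Real.exp (a * Real.log 2))
    - 4 * (Real.log 3 ^ 2 * Real.exp (a * Real.log 3))

lemma hasDerivAt_expc (c x : ℝ) :
    HasDerivAt (fun a : ℝ => Real.exp (a * c)) (c * Real.exp (x * c)) x := by
  have h := ((hasDerivAt_id x).mul_const c).exp
  simpa [mul_comm] using h

lemma hasDerivAt_gFun (x : ℝ) : HasDerivAt gFun (gFun' x) x := by
  have h4 := hasDerivAt_expc (Real.log 4) x
  have h2 := (hasDerivAt_expc (Real.log 2) x).const_mul 6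
  have h3 := (hasDerivAt_expc (Real.log 3) x).const_mul 4
  have := ((h4.add h2).sub h3).sub_const 4
  refine (this.congr_deriv (by unfold gFun'; ring)).congr_of_eventuallyEq (Filter.Eventually.of_forall fun y => ?_)
  simp only [gFun, Pi.add_apply, Pi.sub_apply]

lemma hasDerivAt_gFun' (x : ℝ) : HasDerivAt gFun' (gFun'' x) x := by
  have h4 := (hasDerivAt_expc (Real.log 4) x).const_mul (Real.log 4)
  have h2 := ((hasDerivAt_expc (Real.log 2) x).const_mul (Real.log 2)).const_mul 6
  have h3 := ((hasDerivAt_expc (Real.log 3) x).const_mul (Real.log 3)).const_mul 4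
  have := (h4.add h2).sub h3
  refine (this.congr_deriv (by unfold gFun''; ring)).congr_of_eventuallyEq (Filter.Eventually.of_forall fun y => ?_)
  simp only [gFun', Pi.add_apply, Pi.sub_apply]

lemma log_key : 22 * Real.log 2 ^ 2 < 9 * Real.log 3 ^ 2 := by
  have h2 : 0 < Real.log 2 := Real.log_pos (by norm_num)
  have h3 : 0 < Real.log 3 := Real.log_pos (by norm_num)
  have h : 250 * Real.log 2 < 159 * Real.log 3 := by
    have hlt : ((2:ℝ) ^ (250:ℕ)) < (3:ℝ) ^ (159:ℕ) := by norm_num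
    have := Real.log_lt_log (by positivity) hlt
    simpa [Real.log_pow] using this
  nlinarith [h, h2, h3]

lemma exp_convex_bound (a c : ℝ) (ha1 : 1 ≤ a) (ha2 : a ≤ 2) :
    Real.exp (a * c) ≤ (2 - a) * Real.exp c + (a - 1) * Real.exp (2 * c) := by
  have h := convexOn_exp.2 (mem_univ c) (mem_univ (2 * c))
      (by linarith : (0:ℝ) ≤ 2 - a) (by linarith : (0:ℝ) ≤ a - 1) (by ring)
  have harg : (2 - a) • c + (a - 1) • (2 * c) = a * c := by
    simp [smul_eq_mul]; ring
  rw [harg] at h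
  simpa [smul_eq_mul] using h

lemma gFun''_neg (x : ℝ) (hx : x ∈ Set.Ioo (1:ℝ) 2) : gFun'' x < 0 := by
  obtain ⟨hx1, hx2⟩ := hx
  have h2 : 0 < Real.log 2 := Real.log_pos (by norm_num)
  have h3 : 0 < Real.log 3 := Real.log_pos (by norm_num)
  have hlog4 : Real.log 4 = 2 * Real.log 2 := by
    rw [show (4:ℝ) = 2 ^ 2 by norm_num, Real.log_pow]; push_cast; ring
  -- write exp(x * log 4) = exp(x * log 3) * exp (x * log (4/3)) etc.
  have e43 : Real.exp (x * Real.log 4) =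
      Real.exp (x * Real.log 3) * Real.exp (x * Real.log (4/3)) := by
    rw [← Real.exp_add, ← mul_add, Real.log_div (by norm_num) (by norm_num)]
    ring_nf
  have e23 : Real.exp (x * Real.log 2) =
      Real.exp (x * Real.log 3) * Real.exp (x * Real.log (2/3)) := by
    rw [← Real.exp_add, ← mul_add, Real.log_div (by norm_num) (by norm_num)]
    ring_nf
  set E3 := Real.exp (x * Real.log 3) with hE3
  have hE3pos : 0 < E3 := Real.exp_pos _
  -- bound exp(x * log (4/3)) and exp(x * log (2/3))
  have b1 : Real.exp (x * Real.log (4/3)) ≤ (2 - x) * (4/3) + (x - 1) * (16/9) := by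
    have := exp_convex_bound x (Real.log (4/3)) hx1.le hx2.le
    have ha : Real.exp (Real.log (4/3 : ℝ)) = 4/3 := Real.exp_log (by norm_num)
    have hb : Real.exp (2 * Real.log (4/3 : ℝ)) = 16/9 := by
      rw [two_mul, Real.exp_add, ha]; norm_num
    rw [ha, hb] at this; exact this
  have b2 : Real.exp (x * Real.log (2/3)) ≤ (2 - x) * (2/3) + (x - 1) * (4/9) := by
    have := exp_convex_bound x (Real.log (2/3)) hx1.le hx2.le
    have ha : Real.exp (Real.log (2/3 : ℝ)) = 2/3 := Real.exp_log (by norm_num)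
    have hb : Real.exp (2 * Real.log (2/3 : ℝ)) = 4/9 := by
      rw [two_mul, Real.exp_add, ha]; norm_num
    rw [ha, hb] at this; exact this
  -- combine: 4 * exp(x log4) + 6 * exp(x log2) ≤ (88/9) * E3
  have hcomb : 4 * Real.exp (x * Real.log 4) + 6 * Real.exp (x * Real.log 2)
      ≤ (88/9) * E3 := by
    rw [e43, e23]
    have : 4 * Real.exp (x * Real.log (4/3)) + 6 * Real.exp (x * Real.log (2/3))
        ≤ 88/9 := by nlinarith [b1, b2]
    nlinarith [this, hE3pos]
  have hkey := log_key
  have hsq : Real.log 4 ^ 2 = 4 * Real.log 2 ^ 2 := by rw [hlog4]; ring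
  have hmul := mul_le_mul_of_nonneg_left hcomb (sq_nonneg (Real.log 2))
  have hpos : 0 < (9 * Real.log 3 ^ 2 - 22 * Real.log 2 ^ 2) * E3 :=
    mul_pos (by linarith) hE3pos
  unfold gFun''
  rw [hE3] at hmul hpos
  rw [hsq]
  linarith [hmul, hpos]

lemma gFun_pos (a : ℝ) (ha : a ∈ Set.Ioo (1:ℝ) 2) : 0 < gFun a := by
  have hderiv : deriv gFun = gFun' := funext fun x => (hasDerivAt_gFun x).deriv
  have hderiv' : deriv gFun' = gFun'' := funext fun x => (hasDerivAt_gFun' x).deriv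
  have hconc : StrictConcaveOn ℝ (Set.Icc (1:ℝ) 2) gFun := by
    apply strictConcaveOn_of_deriv2_neg (convex_Icc 1 2)
    · exact Continuous.continuousOn (by unfold gFun; fun_prop)
    · intro x hx
      rw [interior_Icc] at hx
      have : deriv^[2] gFun x = gFun'' x := by
        simp only [Function.iterate_succ, Function.iterate_zero, Function.comp,
          id_eq, hderiv, hderiv']
      rw [this]
      exact gFun''_neg x hx
  obtain ⟨ha1, ha2⟩ := ha
  have g1 : gFun 1 = 0 := by
    unfold gFun
    rw [one_mul, one_mul, one_mul, Real.exp_log (by norm_num : (0:ℝ) < 4),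
      Real.exp_log (by norm_num : (0:ℝ) < 2), Real.exp_log (by norm_num : (0:ℝ) < 3)]
    norm_num
  have g2 : gFun 2 = 0 := by
    unfold gFun
    rw [two_mul, two_mul, two_mul, Real.exp_add, Real.exp_add, Real.exp_add,
      Real.exp_log (by norm_num : (0:ℝ) < 4),
      Real.exp_log (by norm_num : (0:ℝ) < 2), Real.exp_log (by norm_num : (0:ℝ) < 3)]
    norm_num
  have h := hconc.2 (Set.left_mem_Icc.2 (by norm_num)) (Set.right_mem_Icc.2 (by norm_num))
    (by norm_num : (1:ℝ) ≠ 2) (by linarith : (0:ℝ) < 2 - a) (by linarith : (0:ℝ) < a - 1)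
    (by ring)
  have harg : (2 - a) • (1:ℝ) + (a - 1) • (2:ℝ) = a := by simp [smul_eq_mul]; ring
  rw [harg, g1, g2] at h
  simpa using h

theorem rho1_sq_lt_rho3 (H : ℝ) (hH : H ∈ Set.Ioo (1/2 : ℝ) 1) :
    ((2:ℝ) ^ (2*H-1) - 1)^2 < (1/2) * ((4:ℝ) ^ (2*H) - 2 * (3:ℝ) ^ (2*H) + (2:ℝ) ^ (2*H)) := by
  obtain ⟨hH1, hH2⟩ := hH
  have ha : 2 * H ∈ Set.Ioo (1:ℝ) 2 := ⟨by linarith, by linarith⟩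
  have hg := gFun_pos (2 * H) ha
  unfold gFun at hg
  -- convert exps to rpow
  have e4 : Real.exp (2 * H * Real.log 4) = (4:ℝ) ^ (2*H) := by
    rw [Real.rpow_def_of_pos (by norm_num : (0:ℝ) < 4)]; ring_nf
  have e2 : Real.exp (2 * H * Real.log 2) = (2:ℝ) ^ (2*H) := by
    rw [Real.rpow_def_of_pos (by norm_num : (0:ℝ) < 2)]; ring_nf
  have e3 : Real.exp (2 * H * Real.log 3) = (3:ℝ) ^ (2*H) := by
    rw [Real.rpow_def_of_pos (by norm_num : (0:ℝ) < 3)]; ring_nf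
  rw [e4, e2, e3] at hg
  -- 4^(2H) = (2^(2H))^2
  have h42 : (4:ℝ) ^ (2*H) = ((2:ℝ) ^ (2*H)) ^ 2 := by
    rw [← Real.rpow_natCast ((2:ℝ) ^ (2*H)) 2, ← Real.rpow_mul (by norm_num : (0:ℝ) ≤ 2)]
    rw [show (4:ℝ) = (2:ℝ) ^ (2:ℝ) by
      rw [show (2:ℝ) = ((2:ℕ):ℝ) by norm_num, Real.rpow_natCast]; norm_num]
    rw [← Real.rpow_mul (by norm_num : (0:ℝ) ≤ 2)]
    norm_num; ring_nf
  -- 2^(2H-1) = 2^(2H) / 2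
  have h21 : (2:ℝ) ^ (2*H-1) = (2:ℝ) ^ (2*H) / 2 := by
    rw [Real.rpow_sub (by norm_num : (0:ℝ) < 2), Real.rpow_one]
  rw [h21, h42]
  rw [h42] at hg
  nlinarith [hg]
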